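/- Let S be a Cu-semigroup satisfying (O5), let u ∈ S be a full compact element, and suppose there exists R ∈ ℕ such that for all x, y ∈ S: if λ(x) + R·λ(u) ≤ λ(y) for every functional λ on S, then x ≤ y (that is, (S,u) has radius of comparison at most R). Then (S,u) has LBCA for uniformly full elements: for every γ ∈ (0,1) and every d ∈ ℕ there exists N ∈ ℕ such that for all x, y ∈ S with x ≤ d·u, y ≤ d·u and u ≤ d·y: if λ(x) ≤ γ·λ(y) for every functional λ on S, then x ≤_N y. -/

import Mathlib

open scoped ENNReal

section CuPreamble

variable {S : Type*} [AddCommMonoid S] [PartialOrder S]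

/-- The way-below (compact containment) relation: `x ≪ y` if for every increasing
sequence with a supremum above `y`, some term dominates `x`. -/
def WayBelow (x y : S) : Prop :=
  ∀ (f : ℕ → S) (s : S), Monotone f → IsLUB (Set.range f) s → y ≤ s → ∃ n, x ≤ f n

/-- A Cu-semigroup: a positively ordered commutative monoid satisfying (O1)-(O4). -/
structure IsCuSemigroup (S : Type*) [AddCommMonoid S] [PartialOrder S] : Prop where
  zero_le : ∀ x : S, 0 ≤ x
  add_le_add : ∀ ⦃a b c d : S⦄, a ≤ b → c ≤ d → a + c ≤ b + d
  O1 : ∀ f : ℕ → S, Monotone f → ∃ s : S, IsLUB (Set.range f) s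
  O2 : ∀ x : S, ∃ f : ℕ → S, (∀ n, WayBelow (f n) (f (n + 1))) ∧ IsLUB (Set.range f) x
  O3 : ∀ ⦃x₁ x₂ y₁ y₂ : S⦄, WayBelow x₁ x₂ → WayBelow y₁ y₂ → WayBelow (x₁ + y₁) (x₂ + y₂)
  O4 : ∀ (f g : ℕ → S) (s t : S), Monotone f → Monotone g → IsLUB (Set.range f) s →
    IsLUB (Set.range g) t → IsLUB (Set.range fun n => f n + g n) (s + t)

/-- The axiom (O5), including the strengthened form. -/
def SatisfiesO5 (S : Type*) [AddCommMonoid S] [PartialOrder S] : Prop :=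
  (∀ x' x y : S, WayBelow x' x → x ≤ y → ∃ z : S, x' + z ≤ y ∧ y ≤ x + z) ∧
  (∀ x' x y w' w : S, WayBelow x' x → x + w ≤ y → WayBelow w' w →
    ∃ z : S, WayBelow w' z ∧ x' + z ≤ y ∧ y ≤ x + z)

/-- The axiom (O6). -/
def SatisfiesO6 (S : Type*) [AddCommMonoid S] [PartialOrder S] : Prop :=
  ∀ x' x y z : S, WayBelow x' x → x ≤ y + z →
    ∃ y' z' : S, x' ≤ y' + z' ∧ y' ≤ y ∧ y' ≤ x ∧ z' ≤ z ∧ z' ≤ x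

/-- A functional on a Cu-semigroup: a map to `[0,∞]` preserving order, addition, zero,
and suprema of increasing sequences. -/
structure IsFunctional (l : S → ℝ≥0∞) : Prop where
  mono : Monotone l
  map_zero : l 0 = 0
  map_add : ∀ x y : S, l (x + y) = l x + l y
  map_sup : ∀ (f : ℕ → S) (s : S), Monotone f → IsLUB (Set.range f) s → l s = ⨆ n, l (f n)

/-- Edwards' condition. -/
def EdwardsCondition (S : Type*) [AddCommMonoid S] [PartialOrder S] : Prop :=
  ∀ l : S → ℝ≥0∞, IsFunctional l → ∀ x y : S,
    sInf {r : ℝ≥0∞ | ∃ l₁ l₂ : S → ℝ≥0∞, IsFunctional l₁ ∧ IsFunctional l₂ ∧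
        (∀ s : S, l₁ s + l₂ s = l s) ∧ r = l₁ x + l₂ y} =
    sSup {r : ℝ≥0∞ | ∃ z : S, z ≤ x ∧ z ≤ y ∧ r = l z}

/-- A scale on a Cu-semigroup. -/
structure IsScale (Sg : Set S) : Prop where
  hered : ∀ ⦃x y : S⦄, y ≤ x → x ∈ Sg → y ∈ Sg
  supClosed : ∀ (f : ℕ → S) (s : S), Monotone f → (∀ n, f n ∈ Sg) →
    IsLUB (Set.range f) s → s ∈ Sg
  generates : ∀ x' x : S, WayBelow x' x → ∃ L : List S, (∀ z ∈ L, z ∈ Sg) ∧ x' ≤ L.sum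

/-- The `d`-fold amplification `Σ^{(d)}` of a scale. -/
def scaleAmp (Sg : Set S) : ℕ → Set S
  | 0 => {0}
  | d + 1 => {x : S | ∀ x' : S, WayBelow x' x →
      ∃ f : Fin (d + 1) → S, (∀ i, f i ∈ Sg) ∧ WayBelow x' (∑ i, f i)}

end CuPreamble

private lemma functional_nsmul' {S : Type*} [AddCommMonoid S] [PartialOrder S]
    {l : S → ℝ≥0∞} (hl : IsFunctional l) (n : ℕ) (x : S) :
    l (n • x) = n * l x := by
  induction n with
  | zero => simpa using hl.map_zero
  | succ n ih =>
    rw [succ_nsmul, hl.map_add, ih]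
    push_cast
    ring

/-- A Cu-semigroup with (O5) and a full compact element `u` with radius of comparison
at most `R` has LBCA for uniformly full elements. -/
theorem stmt_8 {S : Type*} [AddCommMonoid S] [PartialOrder S]
    (hCu : IsCuSemigroup S) (hO5 : SatisfiesO5 S) (u : S)
    (hu_compact : WayBelow u u)
    (hu_full : ∃ t : S, IsLUB (Set.range fun n : ℕ => n • u) t ∧ ∀ x : S, x ≤ t)
    (R : ℕ)
    (hR : ∀ x y : S, (∀ l : S → ℝ≥0∞, IsFunctional l → l x + R * l u ≤ l y) → x ≤ y) :
    ∀ γ : ℝ≥0∞, 0 < γ → γ < 1 → ∀ d : ℕ, ∃ N : ℕ, ∀ x y : S,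
      x ≤ d • u → y ≤ d • u → u ≤ d • y →
      (∀ l : S → ℝ≥0∞, IsFunctional l → l x ≤ γ * l y) →
      ∀ n : ℕ, N ≤ n → n • x ≤ n • y := by
  intro γ hγ0 hγ1 d
  have hγtop : (1:ℝ≥0∞) - γ ≠ 0 := by
    simpa [tsub_eq_zero_iff_le] using hγ1.not_ge
  have hγfin : (1:ℝ≥0∞) - γ ≠ ∞ := (tsub_le_self.trans_lt (by norm_num)).ne
  obtain ⟨N, hN⟩ := ENNReal.exists_nat_gt
    (show ((R:ℝ≥0∞) * d) / (1 - γ) ≠ ∞ from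
      (ENNReal.div_lt_top (by finiteness) hγtop).ne)
  refine ⟨N, ?_⟩
  intro x y hx hy huy hxy n hn
  apply hR
  intro l hfl
  rw [functional_nsmul' hfl, functional_nsmul' hfl]
  have hu_le : l u ≤ (d:ℝ≥0∞) * l y := by
    calc l u ≤ l (d • y) := hfl.mono huy
      _ = (d:ℝ≥0∞) * l y := functional_nsmul' hfl d y
  have hx_le : l x ≤ γ * l y := hxy l hfl
  have hn' : ((R:ℝ≥0∞) * d) ≤ (n:ℝ≥0∞) * (1 - γ) := by
    have h2 : ((R:ℝ≥0∞) * d) / (1 - γ) < (n:ℝ≥0∞) :=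
      hN.trans_le (by exact_mod_cast hn)
    exact ((ENNReal.div_lt_iff (Or.inl hγtop) (Or.inl hγfin)).mp h2).le
  have hkey : (n:ℝ≥0∞) * γ + (R:ℝ≥0∞) * d ≤ (n:ℝ≥0∞) := by
    calc (n:ℝ≥0∞) * γ + (R:ℝ≥0∞) * d ≤ (n:ℝ≥0∞) * γ + (n:ℝ≥0∞) * (1 - γ) :=
          add_le_add_right hn' _
      _ = (n:ℝ≥0∞) * (γ + (1 - γ)) := (mul_add _ _ _).symm
      _ = (n:ℝ≥0∞) := by rw [add_tsub_cancel_of_le hγ1.le, mul_one]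
  calc (n:ℝ≥0∞) * l x + (R:ℝ≥0∞) * l u
      ≤ (n:ℝ≥0∞) * (γ * l y) + (R:ℝ≥0∞) * ((d:ℝ≥0∞) * l y) :=
        add_le_add (mul_le_mul_right hx_le _) (mul_le_mul_right hu_le _)
    _ = ((n:ℝ≥0∞) * γ + (R:ℝ≥0∞) * d) * l y := by ring
    _ ≤ (n:ℝ≥0∞) * l y := mul_le_mul_left hkey _
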